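/- Suppose L is even and the L×L matrices R, V, T satisfy the chiral relations KRK = −R, KVK = −V, KTK = −T, where K = diag(1_{L/2}, −1_{L/2}), and R, T are invertible. Then the 2L×2L matrix K⊗σ₃ := diag(K, −K) conjugates the transfer matrices: (K⊗σ₃) 𝒯^E (K⊗σ₃) = 𝒯^{−E} for all E ∈ ℂ. Consequently det(𝒯^E − z·1) = det(𝒯^{−E} − z·1) for all z, so 𝒯^E and 𝒯^{−E} have the same eigenvalues. -/

import Mathlib

open Matrix

noncomputable section

/-- The transfer matrix `𝒯^E = ((E·1 − V)T⁻¹, −R; T⁻¹, 0)` over index type `α ⊕ α`. -/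
def transferMatrix {α : Type*} [Fintype α] [DecidableEq α]
    (R V T : Matrix α α ℂ) (E : ℂ) : Matrix (α ⊕ α) (α ⊕ α) ℂ :=
  Matrix.fromBlocks ((E • (1 : Matrix α α ℂ) - V) * T⁻¹) (-R) T⁻¹ 0

/-- The chiral symmetry `K = diag(1_{L/2}, −1_{L/2})` on `ℂ^{2m}` (here `L = 2m`). -/
def chiralK (m : ℕ) : Matrix (Fin m ⊕ Fin m) (Fin m ⊕ Fin m) ℂ :=
  Matrix.fromBlocks 1 0 0 (-1)

/-- The doubled symmetry `K ⊗ σ₃ = diag(K, −K)` acting on `ℂ^{2L}`. -/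
def chiralKSigma3 (m : ℕ) :
    Matrix ((Fin m ⊕ Fin m) ⊕ (Fin m ⊕ Fin m)) ((Fin m ⊕ Fin m) ⊕ (Fin m ⊕ Fin m)) ℂ :=
  Matrix.fromBlocks (chiralK m) 0 0 (-(chiralK m))

theorem chiral_transfer_conjugation (m : ℕ) (hm : 1 ≤ m)
    (R V T : Matrix (Fin m ⊕ Fin m) (Fin m ⊕ Fin m) ℂ)
    (hRu : IsUnit R.det) (hTu : IsUnit T.det)
    (hR : chiralK m * R * chiralK m = -R)
    (hV : chiralK m * V * chiralK m = -V)
    (hT : chiralK m * T * chiralK m = -T)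
    (E : ℂ) :
    chiralKSigma3 m * transferMatrix R V T E * chiralKSigma3 m
        = transferMatrix R V T (-E) ∧
      (∀ z : ℂ,
        (transferMatrix R V T E - z • 1).det
          = (transferMatrix R V T (-E) - z • 1).det) ∧
      spectrum ℂ (transferMatrix R V T E) = spectrum ℂ (transferMatrix R V T (-E)) := by

  set K := chiralK m with hKdef
  have hK2 : K * K = 1 := by
    simp [hKdef, chiralK, Matrix.fromBlocks_multiply, Matrix.fromBlocks_one]
  have hTinv : K * T⁻¹ * K = -T⁻¹ := by
    have h1 : T * T⁻¹ = 1 := Matrix.mul_nonsing_inv T hTu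
    have h2 : (-T) * (K * T⁻¹ * K) = 1 := by
      rw [← hT]
      simp only [mul_assoc]
      rw [← mul_assoc K K, hK2, one_mul, ← mul_assoc T, h1, one_mul, hK2]
    have h3 : (-T) * (-T⁻¹) = 1 := by rw [neg_mul_neg, h1]
    have := Matrix.inv_eq_right_inv h2
    rw [Matrix.inv_eq_right_inv h3] at this
    exact this.symm
  have hA : K * ((E • (1 : Matrix _ _ ℂ) - V) * T⁻¹) * K
      = ((-E) • (1 : Matrix _ _ ℂ) - V) * T⁻¹ := by
    have hKV : K * (E • (1 : Matrix _ _ ℂ) - V) * K = E • (1 : Matrix _ _ ℂ) + V := by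
      rw [mul_sub, sub_mul, hV, mul_smul_comm, smul_mul_assoc, mul_one, hK2, sub_neg_eq_add]
    calc K * ((E • (1 : Matrix _ _ ℂ) - V) * T⁻¹) * K
        = (K * (E • (1 : Matrix _ _ ℂ) - V) * K) * (K * T⁻¹ * K) := by
          simp only [mul_assoc]
          rw [← mul_assoc K K, hK2, one_mul]
      _ = (E • (1 : Matrix _ _ ℂ) + V) * (-T⁻¹) := by rw [hKV, hTinv]
      _ = ((-E) • (1 : Matrix _ _ ℂ) - V) * T⁻¹ := by
          rw [mul_neg, ← neg_mul]
          congr 1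
          rw [neg_add, neg_smul, ← sub_eq_add_neg]
  have hconj : chiralKSigma3 m * transferMatrix R V T E * chiralKSigma3 m
      = transferMatrix R V T (-E) := by
    simp only [transferMatrix, chiralKSigma3, Matrix.fromBlocks_multiply,
      Matrix.mul_zero, Matrix.zero_mul, add_zero, zero_add, mul_zero, zero_mul,
      Matrix.mul_neg, Matrix.neg_mul, neg_neg, neg_zero]
    rw [hA, ← hKdef, hR, hTinv, neg_neg]
  have hS2 : chiralKSigma3 m * chiralKSigma3 m = 1 := by
    have hK2' := hK2
    rw [hKdef] at hK2'
    simp [chiralKSigma3, Matrix.fromBlocks_multiply, hK2', Matrix.fromBlocks_one]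
  have hdet : ∀ z : ℂ, (transferMatrix R V T E - z • 1).det
      = (transferMatrix R V T (-E) - z • 1).det := by
    intro z
    have key : chiralKSigma3 m * (transferMatrix R V T E - z • 1) * chiralKSigma3 m
        = transferMatrix R V T (-E) - z • 1 := by
      rw [mul_sub, sub_mul, hconj]
      congr 1
      rw [mul_smul_comm, smul_mul_assoc, mul_one, hS2]
    calc (transferMatrix R V T E - z • 1).det
        = (chiralKSigma3 m * (transferMatrix R V T E - z • 1) * chiralKSigma3 m).det := by
          rw [Matrix.det_mul, Matrix.det_mul, mul_comm, ← mul_assoc, ← Matrix.det_mul, hS2,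
            Matrix.det_one, one_mul]
      _ = _ := by rw [key]
  refine ⟨hconj, hdet, ?_⟩
  ext z
  simp only [spectrum.mem_iff, Matrix.isUnit_iff_isUnit_det,
    Algebra.algebraMap_eq_smul_one]
  have hz : ∀ A : Matrix ((Fin m ⊕ Fin m) ⊕ (Fin m ⊕ Fin m))
      ((Fin m ⊕ Fin m) ⊕ (Fin m ⊕ Fin m)) ℂ,
      (z • (1:Matrix _ _ ℂ) - A).det = (A - z • 1).det := by
    intro A
    rw [← neg_sub A, Matrix.det_neg, Even.neg_one_pow, one_mul]
    simp only [Fintype.card_sum, Fintype.card_fin]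
    exact ⟨m + m, by ring⟩
  rw [hz, hz, hdet z]
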